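/- Let $K$, $\phi$, $F$ be as above, let $W \in H^1(\tilde\Omega_T\times\mathbb{R})$ have $(t,x)$-support in $K$, and set $\mathcal{S} = \{(t,x)\in\tilde\Omega_T : \phi(t,x) = 0\}$. Then $\lim_{\epsilon\to 0}\epsilon^{-1/2}\|W(t,x,\phi/\epsilon)\|_{L^2(\tilde\Omega_T)} = \big\| W / |\nabla_{t,x}\phi|^{1/2} \big\|_{L^2(\mathcal{S}\times\mathbb{R}_\theta)}$, i.e. the limiting $L^2$ size of the rescaled pulse equals the weighted $L^2$ norm of the trace of $W$ on the zero level set of $\phi$. -/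

import Mathlib

open MeasureTheory Filter
open scoped ENNReal Topology

/-- Points of space-time `(t, x) ∈ ℝ × ℝⁿ`. -/
abbrev Pt (n : ℕ) : Type := ℝ × (Fin n → ℝ)

/-- The Euclidean length of the space-time gradient `|∇_{t,x}φ|` encoded by the differential
`L = dφ ∈ (ℝ × ℝⁿ →L[ℝ] ℝ)`. -/
noncomputable def gradNorm {n : ℕ} (L : Pt n →L[ℝ] ℝ) : ℝ :=
  Real.sqrt ((L (1, 0)) ^ 2 + ∑ i : Fin n, (L (0, Pi.single i 1)) ^ 2)

lemma det_prod_snd {n : ℕ} (L : Pt n →L[ℝ] ℝ) :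
    (L.prod (ContinuousLinearMap.snd ℝ ℝ (Fin n → ℝ))).det = L (1, 0) := by
  classical
  set A := L.prod (ContinuousLinearMap.snd ℝ ℝ (Fin n → ℝ)) with hA
  have hdet : ContinuousLinearMap.det A = LinearMap.det (A : Pt n →ₗ[ℝ] Pt n) := rfl
  rw [hdet]
  set b : Module.Basis (Unit ⊕ Fin n) ℝ (Pt n) := (Module.Basis.singleton Unit ℝ).prod (Pi.basisFun ℝ (Fin n))
  rw [← LinearMap.det_toMatrix b]
  have hM : LinearMap.toMatrix b b (A : Pt n →ₗ[ℝ] Pt n)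
      = Matrix.fromBlocks (Matrix.of fun _ _ : Unit => L (1, 0))
          (Matrix.of fun _ (j : Fin n) => L (0, Pi.single j 1)) 0 1 := by
    ext i j
    cases i <;> cases j <;>
      simp [LinearMap.toMatrix_apply, b, Module.Basis.prod_apply, Pi.basisFun_apply, A,
        Matrix.one_apply, Pi.single_apply, eq_comm]
  rw [hM, Matrix.det_fromBlocks_zero₂₁]
  simp

/-- **Trace formula for the limiting pulse size (Proposition `a20`).**  In the setting of the
refined pulse estimate (`K` compact, `(t,x) ↦ (φ(t,x),x)` a `C¹` diffeomorphism on a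
neighborhood `𝒪` of `K` with inverse `F(s,x) = (t(s,x),x)`, and `W ∈ H¹(Ω̃_T × ℝ)` with
`(t,x)`-support in `K`), one has
`lim_{ε→0} ε^{-1/2} ‖W(t,x,φ/ε)‖_{L²(Ω̃_T)} = ‖ W / |∇_{t,x}φ|^{1/2} ‖_{L²(𝒮 × ℝ_θ)}`,
where `𝒮 = {φ = 0}`.  The surface integral over `𝒮` is expressed through the graph
parametrization `x ↦ (τ(x), x)`, `τ(x) = t(0,x)`, with surface element
`dS = √(1 + |∇τ|²) dx`. -/
theorem pulse_trace_limit {n : ℕ} (T : ℝ) (hT : 0 < T)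
    (K : Set (Pt n)) (hK : IsCompact K)
    (hKΩ : K ⊆ {p : Pt n | p.1 ∈ Set.Icc 0 T})
    (O : Set (Pt n)) (hO : IsOpen O) (hKO : K ⊆ O)
    (φ : Pt n → ℝ) (hφ : ContDiffOn ℝ 1 φ O)
    (φ' : Pt n → (Pt n →L[ℝ] ℝ)) (hφ' : ∀ p ∈ O, HasFDerivAt φ (φ' p) p)
    (hΦinj : Set.InjOn (fun p : Pt n => ((φ p, p.2) : Pt n)) O)
    (F : Pt n → Pt n)
    (hFinv : ∀ p ∈ O, F (φ p, p.2) = p)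
    (hFC1 : ContDiffOn ℝ 1 F ((fun p : Pt n => ((φ p, p.2) : Pt n)) '' O))
    (τ : (Fin n → ℝ) → ℝ) (hτ : ∀ x, τ x = (F ((0 : ℝ), x)).1)
    (τ' : (Fin n → ℝ) → ((Fin n → ℝ) →L[ℝ] ℝ))
    (hτ' : ∀ x, HasFDerivAt τ (τ' x) x)
    (W : Pt n × ℝ → ℂ) (W' : Pt n × ℝ → (Pt n × ℝ) →L[ℝ] ℂ)
    (hW : ∀ q, HasFDerivAt W (W' q) q)
    (hWsupp : HasCompactSupport W)
    (hWK : ∀ q : Pt n × ℝ, q.1 ∉ K → W q = 0) :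
    Tendsto
      (fun ε : ℝ =>
        Real.sqrt (ε⁻¹ * ∫ p in {p : Pt n | p.1 ∈ Set.Icc 0 T}, ‖W (p, φ p / ε)‖ ^ 2))
      (𝓝[>] (0 : ℝ))
      (𝓝 (Real.sqrt (∫ x in {x : Fin n → ℝ |
            (((0 : ℝ), x) : Pt n) ∈ (fun p : Pt n => ((φ p, p.2) : Pt n)) '' O},
          ∫ θ : ℝ, ‖W ((τ x, x), θ)‖ ^ 2 *
            Real.sqrt (1 + ∑ i : Fin n, (τ' x (Pi.single i 1)) ^ 2) /
              gradNorm (φ' (τ x, x))))) := by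
  classical
  haveI hHaar : (volume : Measure (Pt n)).IsAddHaarMeasure := by
    rw [MeasureTheory.Measure.volume_eq_prod]; infer_instance
  set Φ : Pt n → Pt n := fun p => (φ p, p.2) with hΦdef
  set S : Set (Pt n) := Φ '' O with hSdef
  set A : Pt n → (Pt n →L[ℝ] Pt n) :=
    fun p => (φ' p).prod (ContinuousLinearMap.snd ℝ ℝ (Fin n → ℝ)) with hAdef
  have hA : ∀ p ∈ O, HasFDerivAt Φ (A p) p := fun p hp =>
    (hφ' p hp).prodMk (hasFDerivAt_snd)
  have hFΦ : ∀ p ∈ O, F (Φ p) = p := fun p hp => hFinv p hp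
  have hmapsTo : Set.MapsTo Φ O S := Set.mapsTo_image Φ O
  have hdetA : ∀ p ∈ O, (A p).det ≠ 0 := by
    intro p hp
    have hq : Φ p ∈ S := Set.mem_image_of_mem Φ hp
    have hdF : DifferentiableWithinAt ℝ F S (Φ p) :=
      (hFC1 (Φ p) hq).differentiableWithinAt one_ne_zero
    obtain ⟨B, hB⟩ : ∃ B, HasFDerivWithinAt F B S (Φ p) := ⟨_, hdF.hasFDerivWithinAt⟩
    have hcomp : HasFDerivWithinAt (F ∘ Φ) (B.comp (A p)) O p :=
      hB.comp p ((hA p hp).hasFDerivWithinAt) hmapsTo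
    have hcomp' : HasFDerivAt (F ∘ Φ) (B.comp (A p)) p :=
      hcomp.hasFDerivAt (hO.mem_nhds hp)
    have heq : (F ∘ Φ) =ᶠ[𝓝 p] id := by
      filter_upwards [hO.mem_nhds hp] with r hr
      exact hFΦ r hr
    have hid : HasFDerivAt (id : Pt n → Pt n) (B.comp (A p)) p :=
      hcomp'.congr_of_eventuallyEq heq.symm
    have hBA : B.comp (A p) = ContinuousLinearMap.id ℝ (Pt n) :=
      hid.unique (hasFDerivAt_id p)
    intro h0
    have h1 : (B.comp (A p)).det = (1 : ℝ) := by rw [hBA]; exact LinearMap.det_id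
    rw [show (B.comp (A p)).det = B.det * (A p).det from LinearMap.det_comp _ _] at h1
    rw [h0, mul_zero] at h1; exact zero_ne_one h1
  have hSopen : IsOpen S := by
    rw [isOpen_iff_mem_nhds]
    rintro q ⟨p, hp, rfl⟩
    have hcd : ContDiffAt ℝ 1 Φ p := by
      have h1 : ContDiffAt ℝ 1 φ p := hφ.contDiffAt (hO.mem_nhds hp)
      exact h1.prodMk contDiffAt_snd
    let e : Pt n ≃L[ℝ] Pt n :=
      LinearEquiv.toContinuousLinearEquiv
        (LinearMap.equivOfDetNeZero ((A p) : Pt n →ₗ[ℝ] Pt n) (hdetA p hp))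
    have he : (e : Pt n →L[ℝ] Pt n) = A p := by
      apply ContinuousLinearMap.ext; intro v; rfl
    have hstrict : HasStrictFDerivAt Φ (e : Pt n →L[ℝ] Pt n) p := by
      refine hcd.hasStrictFDerivAt' ?_ one_ne_zero
      rw [he]; exact hA p hp
    have hmap := hstrict.map_nhds_eq_of_equiv
    rw [← hmap]
    exact Filter.image_mem_map (hO.mem_nhds hp)
  have hFS : ∀ q ∈ S, F q ∈ O ∧ Φ (F q) = q := by
    rintro q ⟨p, hp, rfl⟩
    rw [hFΦ p hp]
    exact ⟨hp, rfl⟩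
  set F' : Pt n → (Pt n →L[ℝ] Pt n) := fun q => fderiv ℝ F q with hF'def
  have hF' : ∀ q ∈ S, HasFDerivAt F (F' q) q := by
    intro q hq
    have := (hFC1 q hq).contDiffAt (hSopen.mem_nhds hq)
    exact (this.differentiableAt one_ne_zero).hasFDerivAt
  have hF'cont : ContinuousOn F' S := hFC1.continuousOn_fderiv_of_isOpen hSopen le_rfl
  have hchain1 : ∀ q ∈ S, (F' q).comp (A (F q)) = ContinuousLinearMap.id ℝ (Pt n) := by
    intro q hq
    obtain ⟨hFqO, hΦFq⟩ := hFS q hq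
    have hAq : HasFDerivAt Φ (A (F q)) (F q) := hA (F q) hFqO
    have hFq : HasFDerivAt F (F' q) (Φ (F q)) := by rw [hΦFq]; exact hF' q hq
    have hcomp : HasFDerivAt (F ∘ Φ) ((F' q).comp (A (F q))) (F q) := hFq.comp (F q) hAq
    have heq : (F ∘ Φ) =ᶠ[𝓝 (F q)] id := by
      filter_upwards [hO.mem_nhds hFqO] with r hr
      exact hFΦ r hr
    have : HasFDerivAt (id : Pt n → Pt n) ((F' q).comp (A (F q))) (F q) :=
      hcomp.congr_of_eventuallyEq heq.symm
    exact this.unique (hasFDerivAt_id (F q))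
  have hdet1 : ∀ q ∈ S, (F' q).det * (A (F q)).det = 1 := by
    intro q hq
    have := congrArg ContinuousLinearMap.det (hchain1 q hq)
    rwa [show ((F' q).comp (A (F q))).det = (F' q).det * (A (F q)).det from
      LinearMap.det_comp _ _, show (ContinuousLinearMap.id ℝ (Pt n)).det = 1 from
      LinearMap.det_id] at this
  -- the slice set V and facts about τ
  set V : Set (Fin n → ℝ) := {x | ((0 : ℝ), x) ∈ S} with hVdef
  have hVopen : IsOpen V := hSopen.preimage (Continuous.prodMk_right (0 : ℝ))
  have hτV : ∀ x ∈ V, F ((0 : ℝ), x) = (τ x, x) ∧ ((τ x, x) : Pt n) ∈ O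
      ∧ φ (τ x, x) = 0 := by
    intro x hx
    obtain ⟨hFO, hΦF⟩ := hFS _ hx
    have h2 : (F ((0 : ℝ), x)).2 = x := congrArg Prod.snd hΦF
    have h1 : F ((0 : ℝ), x) = (τ x, x) := by
      rw [hτ x]; exact Prod.ext rfl h2
    refine ⟨h1, h1 ▸ hFO, ?_⟩
    have hφ0 : φ (F ((0 : ℝ), x)) = 0 := congrArg Prod.fst hΦF
    rwa [h1] at hφ0
  -- the key Jacobian identity on V
  have hkey : ∀ x ∈ V, |(F' ((0 : ℝ), x)).det| =
      Real.sqrt (1 + ∑ i : Fin n, (τ' x (Pi.single i 1)) ^ 2) / gradNorm (φ' (τ x, x)) := by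
    intro x hx
    obtain ⟨hFx, hpO, hφ0⟩ := hτV x hx
    set L := φ' ((τ x, x) : Pt n) with hLdef
    set α := L ((1 : ℝ), (0 : Fin n → ℝ)) with hαdef
    have hLd : ∀ i : Fin n, L (0, Pi.single i 1) = -(τ' x (Pi.single i 1)) * α := by
      have hj : HasFDerivAt (fun y => ((τ y, y) : Pt n))
          ((τ' x).prod (ContinuousLinearMap.id ℝ (Fin n → ℝ))) x :=
        (hτ' x).prodMk (hasFDerivAt_id x)
      have hg : HasFDerivAt (φ ∘ fun y => ((τ y, y) : Pt n))
          (L.comp ((τ' x).prod (ContinuousLinearMap.id ℝ (Fin n → ℝ)))) x :=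
        HasFDerivAt.comp x (hφ' _ hpO) hj
      have hEq : (φ ∘ fun y => ((τ y, y) : Pt n)) =ᶠ[𝓝 x] (fun _ => (0 : ℝ)) := by
        filter_upwards [hVopen.mem_nhds hx] with y hy
        exact (hτV y hy).2.2
      have h0 : HasFDerivAt (fun _ : (Fin n → ℝ) => (0 : ℝ))
          (L.comp ((τ' x).prod (ContinuousLinearMap.id ℝ (Fin n → ℝ)))) x :=
        hg.congr_of_eventuallyEq hEq.symm
      have hz : L.comp ((τ' x).prod (ContinuousLinearMap.id ℝ (Fin n → ℝ))) = 0 :=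
        h0.unique (hasFDerivAt_const (0 : ℝ) x)
      intro i
      have happ := congrFun (congrArg (fun (M : (Fin n → ℝ) →L[ℝ] ℝ) => (M : (Fin n → ℝ) → ℝ)) hz)
        (Pi.single i 1)
      simp only [ContinuousLinearMap.coe_comp', Function.comp_apply,
        ContinuousLinearMap.prod_apply, ContinuousLinearMap.coe_id', id_eq,
        ContinuousLinearMap.zero_apply] at happ
      have hsplit : ((τ' x (Pi.single i 1), Pi.single i 1) : Pt n)
          = (τ' x (Pi.single i 1)) • ((1 : ℝ), (0 : Fin n → ℝ)) + ((0 : ℝ), Pi.single i 1) := by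
        simp [Prod.ext_iff]
      rw [hsplit, map_add, ContinuousLinearMap.map_smul, smul_eq_mul] at happ
      linarith
    have hdetAp : (A ((τ x, x) : Pt n)).det = α := det_prod_snd L
    have hmul : (F' ((0 : ℝ), x)).det * α = 1 := by
      have := hdet1 _ hx
      rwa [hFx, hdetAp] at this
    have hα : α ≠ 0 := by
      intro h; rw [h, mul_zero] at hmul; exact zero_ne_one hmul
    have hsum : (L ((1 : ℝ), (0 : Fin n → ℝ))) ^ 2
        + ∑ i : Fin n, (L (0, Pi.single i 1)) ^ 2
        = α ^ 2 * (1 + ∑ i : Fin n, (τ' x (Pi.single i 1)) ^ 2) := by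
      rw [← hαdef]
      have : ∀ i : Fin n, (L (0, Pi.single i 1)) ^ 2 = α ^ 2 * (τ' x (Pi.single i 1)) ^ 2 := by
        intro i; rw [hLd i]; ring
      rw [Finset.sum_congr rfl (fun i _ => this i), ← Finset.mul_sum]; ring
    have hgrad : gradNorm L = |α| * Real.sqrt (1 + ∑ i : Fin n, (τ' x (Pi.single i 1)) ^ 2) := by
      rw [gradNorm, hsum, Real.sqrt_mul (sq_nonneg α), Real.sqrt_sq_eq_abs]
    have hs1 : (0 : ℝ) < Real.sqrt (1 + ∑ i : Fin n, (τ' x (Pi.single i 1)) ^ 2) := by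
      apply Real.sqrt_pos.2; positivity
    have habs : |(F' ((0 : ℝ), x)).det| = |α|⁻¹ := by
      have : (F' ((0 : ℝ), x)).det = α⁻¹ := eq_inv_of_mul_eq_one_left hmul
      rw [this, abs_inv]
    have hαpos : 0 < |α| := abs_pos.2 hα
    rw [habs, hgrad, eq_div_iff (by positivity)]
    field_simp
  ---------------------------------------------------------------------------
  -- Measure-theoretic part
  ---------------------------------------------------------------------------
  have hWcont : Continuous W := by
    rw [continuous_iff_continuousAt]
    exact fun q => (hW q).differentiableAt.continuousAt
  obtain ⟨C₁, hC₁⟩ := hWsupp.exists_bound_of_continuous hWcont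
  have hC₁0 : 0 ≤ C₁ :=
    le_trans (norm_nonneg (W (((0 : ℝ), fun _ => (0 : ℝ)), (0 : ℝ)))) (hC₁ _)
  set SK : Set (Pt n) := Φ '' K with hSKdef
  have hSKcomp : IsCompact SK :=
    hK.image_of_continuousOn (((hφ.continuousOn.mono hKO)).prodMk continuous_snd.continuousOn)
  have hSKS : SK ⊆ S := Set.image_mono hKO
  obtain ⟨C₂, hC₂⟩ := hSKcomp.exists_bound_of_continuousOn
    (((ContinuousLinearMap.continuous_det.comp_continuousOn hF'cont).abs).mono hSKS)
  set Cb : ℝ := C₁ ^ 2 * max C₂ 0 with hCbdef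
  have hCb0 : 0 ≤ Cb := by positivity
  -- the rescaling map and the rescaled integrand
  set m : ℝ → Pt n → Pt n := fun ε q => (ε * q.1, q.2) with hmdef
  have hmcont : ∀ ε, Continuous (m ε) :=
    fun ε => ((continuous_const.mul continuous_fst).prodMk continuous_snd)
  set H : ℝ → Pt n → ℝ := fun ε q =>
    S.indicator (fun r => ‖W (F r, q.1)‖ ^ 2 * |(F' r).det|) (m ε q) with hHdef
  have hHeval : ∀ ε (q : Pt n),
      H ε q = S.indicator (fun r => ‖W (F r, q.1)‖ ^ 2 * |(F' r).det|) (m ε q) :=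
    fun _ _ => rfl
  have hmeval : ∀ ε (q : Pt n), m ε q = (ε * q.1, q.2) := fun _ _ => rfl
  -- support facts for H
  have hHmem : ∀ ε q, H ε q ≠ 0 →
      m ε q ∈ SK ∧ q ∈ ((fun w : Pt n × ℝ => w.2) '' tsupport W) ×ˢ
        ((fun r : Pt n => r.2) '' SK) := by
    intro ε q hne
    by_cases hm : m ε q ∈ S
    · rw [hHeval] at hne
      simp only [Set.indicator_of_mem hm] at hne
      have hWne : W (F (m ε q), q.1) ≠ 0 := by
        intro h0; rw [h0] at hne; simp at hne
      have hFK : F (m ε q) ∈ K := by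
        by_contra hFK
        exact hWne (hWK (F (m ε q), q.1) hFK)
      have hmSK : m ε q ∈ SK := by
        rw [hSKdef]
        refine ⟨F (m ε q), hFK, (hFS _ hm).2⟩
      refine ⟨hmSK, ?_, ?_⟩
      · exact ⟨(F (m ε q), q.1), subset_tsupport W hWne, rfl⟩
      · exact ⟨m ε q, hmSK, rfl⟩
    · exact absurd (by rw [hHeval]; exact Set.indicator_of_notMem hm _) hne
  set D : Set (Pt n) := ((fun w : Pt n × ℝ => w.2) '' tsupport W) ×ˢ
    ((fun r : Pt n => r.2) '' SK) with hDdef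
  have hDcomp : IsCompact D := (hWsupp.image continuous_snd).prod (hSKcomp.image continuous_snd)
  set bound : Pt n → ℝ := D.indicator (fun _ => Cb) with hbounddef
  have hbound_nonneg : ∀ q, 0 ≤ bound q := fun q => Set.indicator_nonneg (fun _ _ => hCb0) q
  have hHbound : ∀ ε q, ‖H ε q‖ ≤ bound q := by
    intro ε q
    by_cases hne : H ε q = 0
    · rw [hne, norm_zero]; exact hbound_nonneg q
    · obtain ⟨hmSK, hqD⟩ := hHmem ε q hne
      have hbq : bound q = Cb := Set.indicator_of_mem hqD _
      rw [hbq]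
      have hm : m ε q ∈ S := hSKS hmSK
      rw [hHeval, Set.indicator_of_mem hm]
      rw [Real.norm_eq_abs, abs_mul, abs_of_nonneg (by positivity : (0:ℝ) ≤ ‖W (F (m ε q), q.1)‖ ^ 2),
        abs_abs]
      have h1 : ‖W (F (m ε q), q.1)‖ ^ 2 ≤ C₁ ^ 2 :=
        pow_le_pow_left₀ (norm_nonneg _) (hC₁ _) 2
      have h2 : |(F' (m ε q)).det| ≤ max C₂ 0 := by
        have := hC₂ _ hmSK
        rw [Real.norm_eq_abs, abs_abs] at this
        exact le_trans this (le_max_left _ _)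
      calc ‖W (F (m ε q), q.1)‖ ^ 2 * |(F' (m ε q)).det|
          ≤ C₁ ^ 2 * max C₂ 0 := by
            apply mul_le_mul h1 h2 (abs_nonneg _) (by positivity)
        _ = Cb := rfl
  have hbound_int : Integrable bound := by
    rw [hbounddef, integrable_indicator_iff hDcomp.isClosed.measurableSet]
    exact integrableOn_const hDcomp.measure_lt_top.ne
  -- measurability of H ε
  have hHmeas : ∀ ε, AEStronglyMeasurable (H ε) volume := by
    intro ε
    set U : Set (Pt n) := (m ε) ⁻¹' S with hUdef
    have hUopen : IsOpen U := hSopen.preimage (hmcont ε)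
    have hindic : H ε = Set.indicator U
        (fun q => ‖W (F (m ε q), q.1)‖ ^ 2 * |(F' (m ε q)).det|) := by
      funext q
      rw [hHeval]
      simp only [Set.indicator_apply, Set.mem_preimage, hUdef]
    have hmapsU : Set.MapsTo (m ε) U S := fun q hq => hq
    have hcont : ContinuousOn
        (fun q => ‖W (F (m ε q), q.1)‖ ^ 2 * |(F' (m ε q)).det|) U := by
      have hFm : ContinuousOn (fun q => F (m ε q)) U :=
        hFC1.continuousOn.comp (hmcont ε).continuousOn hmapsU
      have c1 : ContinuousOn (fun q => ‖W (F (m ε q), q.1)‖ ^ 2) U :=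
        ((hWcont.comp_continuousOn (hFm.prodMk continuous_fst.continuousOn)).norm).pow 2
      have c2 : ContinuousOn (fun q => |(F' (m ε q)).det|) U :=
        ((ContinuousLinearMap.continuous_det.comp_continuousOn
          (hF'cont.comp (hmcont ε).continuousOn hmapsU))).abs
      exact c1.mul c2
    rw [hindic]
    exact (aestronglyMeasurable_indicator_iff hUopen.measurableSet).2
      (hcont.aestronglyMeasurable hUopen.measurableSet)
  -- Claim A : for ε > 0, the rescaled integral equals ∫ H ε
  have claimA : ∀ ε : ℝ, 0 < ε →
      ε⁻¹ * (∫ p in {p : Pt n | p.1 ∈ Set.Icc 0 T}, ‖W (p, φ p / ε)‖ ^ 2) = ∫ q, H ε q := by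
    intro ε hε
    have hεne : ε ≠ 0 := ne_of_gt hε
    set f : Pt n → ℝ := fun p => ‖W (p, φ p / ε)‖ ^ 2 with hfdef
    have hf0 : ∀ p, p ∉ K → f p = 0 := by
      intro p hp
      rw [hfdef]
      simp only [hWK (p, φ p / ε) hp, norm_zero]
      ring
    have h1 : ∫ p in {p : Pt n | p.1 ∈ Set.Icc 0 T}, f p = ∫ p, f p :=
      setIntegral_eq_integral_of_forall_compl_eq_zero (fun p hp => hf0 p (fun hpK => hp (hKΩ hpK)))
    have h2 : ∫ p, f p = ∫ p in O, f p :=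
      (setIntegral_eq_integral_of_forall_compl_eq_zero
        (fun p hp => hf0 p (fun hpK => hp (hKO hpK)))).symm
    set g : Pt n → ℝ := fun r => ‖W (F r, r.1 / ε)‖ ^ 2 * |(F' r).det| with hgdef
    have h3 : ∫ q in S, g q = ∫ p in O, |(A p).det| • g (Φ p) := by
      rw [hSdef]
      exact integral_image_eq_integral_abs_det_fderiv_smul volume hO.measurableSet
        (fun p hp => (hA p hp).hasFDerivWithinAt) hΦinj g
    have h4 : ∀ p ∈ O, |(A p).det| • g (Φ p) = f p := by
      intro p hp
      have hq : Φ p ∈ S := Set.mem_image_of_mem Φ hp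
      have hdets := hdet1 (Φ p) hq
      rw [hFΦ p hp] at hdets
      show |(A p).det| * (‖W (F (Φ p), φ p / ε)‖ ^ 2 * |(F' (Φ p)).det|)
          = ‖W (p, φ p / ε)‖ ^ 2
      rw [hFΦ p hp]
      have : |(A p).det| * (‖W (p, φ p / ε)‖ ^ 2 * |(F' (Φ p)).det|)
          = (|(F' (Φ p)).det| * |(A p).det|) * ‖W (p, φ p / ε)‖ ^ 2 := by ring
      rw [this, ← abs_mul, hdets, abs_one, one_mul]
    have h5 : ∫ p in O, |(A p).det| • g (Φ p) = ∫ p in O, f p :=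
      setIntegral_congr_fun hO.measurableSet h4
    have h6 : ∫ q in S, g q = ∫ q, S.indicator g q :=
      (integral_indicator hSopen.measurableSet).symm
    -- linear change of variables q ↦ (ε q₁, q₂)
    set Lε : Pt n →L[ℝ] Pt n :=
      (ε • ContinuousLinearMap.fst ℝ ℝ (Fin n → ℝ)).prod
        (ContinuousLinearMap.snd ℝ ℝ (Fin n → ℝ)) with hLεdef
    have hLεcoe : ∀ q, Lε q = m ε q := by
      intro q
      rw [hLεdef, hmdef]
      simp [Prod.ext_iff]
    have hLεdet : Lε.det = ε := by
      rw [hLεdef, det_prod_snd]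
      simp
    have hTinj : Set.InjOn (m ε) Set.univ := by
      intro q _ q' _ h
      rw [hmdef] at h
      obtain ⟨h1', h2'⟩ := Prod.ext_iff.1 h
      exact Prod.ext (mul_left_cancel₀ hεne h1') h2'
    have himg : m ε '' Set.univ = Set.univ := by
      apply Set.eq_univ_of_forall
      intro q
      refine ⟨(ε⁻¹ * q.1, q.2), Set.mem_univ _, ?_⟩
      rw [hmdef]
      exact Prod.ext (by field_simp) rfl
    have h7 : ∫ q in m ε '' Set.univ, S.indicator g q
        = ∫ q in Set.univ, |Lε.det| • S.indicator g (m ε q) := by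
      refine integral_image_eq_integral_abs_det_fderiv_smul volume MeasurableSet.univ
        (fun q _ => ?_) hTinj (S.indicator g)
      have : HasFDerivAt (m ε) Lε q := by
        have := Lε.hasFDerivAt (x := q)
        refine this.congr_of_eventuallyEq ?_
        filter_upwards with r
        exact (hLεcoe r).symm
      exact this.hasFDerivWithinAt
    have h8 : ∀ q, |Lε.det| • S.indicator g (m ε q) = ε * H ε q := by
      intro q
      rw [smul_eq_mul, hLεdet, abs_of_pos hε]
      congr 1
      rw [hHeval]
      by_cases hm : m ε q ∈ S
      · rw [Set.indicator_of_mem hm, Set.indicator_of_mem hm]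
        show ‖W (F (m ε q), (m ε q).1 / ε)‖ ^ 2 * _ = _
        have hdiv : (m ε q).1 / ε = q.1 := by
          rw [hmeval]
          exact mul_div_cancel_left₀ q.1 hεne
        rw [hdiv]
      · rw [Set.indicator_of_notMem hm, Set.indicator_of_notMem hm]
    calc ε⁻¹ * ∫ p in {p : Pt n | p.1 ∈ Set.Icc 0 T}, f p
        = ε⁻¹ * ∫ q in S, g q := by rw [h1, h2, ← h5, ← h3]
      _ = ε⁻¹ * ∫ q in m ε '' Set.univ, S.indicator g q := by
          rw [himg, setIntegral_univ, h6]
      _ = ε⁻¹ * ∫ q in Set.univ, |Lε.det| • S.indicator g (m ε q) := by rw [h7]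
      _ = ε⁻¹ * ∫ q, ε * H ε q := by
          rw [setIntegral_univ]
          congr 1
          exact integral_congr_ae (ae_of_all _ h8)
      _ = ∫ q, H ε q := by
          rw [integral_const_mul, ← mul_assoc, inv_mul_cancel₀ hεne, one_mul]
  -- Claim B : dominated convergence
  have hH0int : Integrable (H 0) volume :=
    hbound_int.mono' (hHmeas 0) (ae_of_all _ fun q => hHbound 0 q)
  have hlim : ∀ q, Tendsto (fun ε => H ε q) (𝓝[>] (0 : ℝ)) (𝓝 (H 0 q)) := by
    intro q
    have hm0 : Tendsto (fun ε => m ε q) (𝓝[>] (0 : ℝ)) (𝓝 (m 0 q)) := by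
      have : Continuous (fun ε : ℝ => m ε q) := by
        rw [hmdef]
        exact (continuous_id.mul continuous_const).prodMk continuous_const
      exact (this.tendsto 0).mono_left nhdsWithin_le_nhds
    by_cases h0 : m 0 q ∈ S
    · have hev : ∀ᶠ ε in 𝓝[>] (0 : ℝ), m ε q ∈ S := hm0 (hSopen.mem_nhds h0)
      set ψ : Pt n → ℝ := fun r => ‖W (F r, q.1)‖ ^ 2 * |(F' r).det| with hψdef
      have hψcont : ContinuousOn ψ S := by
        have c1 : ContinuousOn (fun r => ‖W (F r, q.1)‖ ^ 2) S :=
          ((hWcont.comp_continuousOn (hFC1.continuousOn.prodMk continuousOn_const)).norm).pow 2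
        have c2 : ContinuousOn (fun r => |(F' r).det|) S :=
          (ContinuousLinearMap.continuous_det.comp_continuousOn hF'cont).abs
        exact c1.mul c2
      have hψat : ContinuousAt ψ (m 0 q) := hψcont.continuousAt (hSopen.mem_nhds h0)
      have h1 : Tendsto (fun ε => ψ (m ε q)) (𝓝[>] (0 : ℝ)) (𝓝 (ψ (m 0 q))) :=
        hψat.tendsto.comp hm0
      have h2 : H 0 q = ψ (m 0 q) := by rw [hHeval]; exact Set.indicator_of_mem h0 _
      rw [h2]
      refine h1.congr' ?_
      filter_upwards [hev] with ε hε
      rw [hHeval]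
      exact (Set.indicator_of_mem hε _).symm
    · have hH00 : H 0 q = 0 := by rw [hHeval]; exact Set.indicator_of_notMem h0 _
      rw [hH00]
      have hnSK : m 0 q ∉ SK := fun h => h0 (hSKS h)
      have hev : ∀ᶠ ε in 𝓝[>] (0 : ℝ), m ε q ∉ SK :=
        hm0 (hSKcomp.isClosed.isOpen_compl.mem_nhds hnSK)
      refine tendsto_const_nhds.congr' ?_
      filter_upwards [hev] with ε hε
      by_contra hne
      exact hε (hHmem ε q (fun h => hne h.symm)).1
  have hmain : Tendsto (fun ε => ∫ q, H ε q) (𝓝[>] (0 : ℝ)) (𝓝 (∫ q, H 0 q)) := by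
    refine tendsto_integral_filter_of_dominated_convergence bound ?_ ?_ hbound_int ?_
    · exact Eventually.of_forall hHmeas
    · exact Eventually.of_forall (fun ε => ae_of_all _ (fun q => hHbound ε q))
    · exact ae_of_all _ hlim
  -- Claim C : identification of the limit
  have claimC : ∫ q, H 0 q = ∫ x in V,
      ∫ θ : ℝ, ‖W ((τ x, x), θ)‖ ^ 2 *
        Real.sqrt (1 + ∑ i : Fin n, (τ' x (Pi.single i 1)) ^ 2) /
          gradNorm (φ' (τ x, x)) := by
    have hprod : (volume : Measure (Pt n)) = (volume : Measure ℝ).prod volume :=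
      MeasureTheory.Measure.volume_eq_prod ℝ (Fin n → ℝ)
    have hint' : Integrable (H 0) ((volume : Measure ℝ).prod volume) := by
      rwa [← hprod]
    have hswap : ∫ q, H 0 q = ∫ x : Fin n → ℝ, ∫ θ : ℝ, H 0 (θ, x) := by
      rw [hprod, integral_prod _ hint']
      exact integral_integral_swap hint'
    rw [hswap]
    have hinner : ∀ x : Fin n → ℝ, (∫ θ : ℝ, H 0 (θ, x))
        = V.indicator (fun x => (∫ θ : ℝ, ‖W ((τ x, x), θ)‖ ^ 2) * |(F' ((0:ℝ), x)).det|) x := by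
      intro x
      by_cases hx : x ∈ V
      · have hmem : ((0 : ℝ), x) ∈ S := hx
        have hFx : F ((0 : ℝ), x) = (τ x, x) := (hτV x hx).1
        have hHval : ∀ θ : ℝ, H 0 (θ, x) = ‖W ((τ x, x), θ)‖ ^ 2 * |(F' ((0:ℝ), x)).det| := by
          intro θ
          rw [hHeval]
          have hm0 : m 0 ((θ, x) : Pt n) = ((0 : ℝ), x) := by
            rw [hmeval]; exact Prod.ext (zero_mul θ) rfl
          rw [hm0, Set.indicator_of_mem hmem, hFx]
        rw [Set.indicator_of_mem hx]
        simp_rw [hHval]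
        exact integral_mul_const _ _
      · have hnmem : ((0 : ℝ), x) ∉ S := hx
        have hHval : ∀ θ : ℝ, H 0 (θ, x) = 0 := by
          intro θ
          rw [hHeval]
          have hm0 : m 0 ((θ, x) : Pt n) = ((0 : ℝ), x) := by
            rw [hmeval]; exact Prod.ext (zero_mul θ) rfl
          rw [hm0, Set.indicator_of_notMem hnmem]
        rw [Set.indicator_of_notMem hx]
        simp_rw [hHval]
        exact integral_zero _ _
    simp_rw [hinner]
    rw [integral_indicator hVopen.measurableSet]
    refine setIntegral_congr_fun hVopen.measurableSet ?_
    intro x hx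
    simp_rw [mul_div_assoc]
    rw [integral_mul_const, hkey x hx]
  -- Conclusion
  have htendsto : Tendsto (fun ε => Real.sqrt (∫ q, H ε q)) (𝓝[>] (0 : ℝ))
      (𝓝 (Real.sqrt (∫ q, H 0 q))) :=
    (Real.continuous_sqrt.tendsto _).comp hmain
  rw [claimC] at htendsto
  refine htendsto.congr' ?_
  filter_upwards [self_mem_nhdsWithin] with ε hε
  rw [← claimA ε hε]
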